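/- Let Φ ∈ ℝ^{n×d}, R ∈ ℝⁿ, λ > 0, and let β̂ = ((1/n)ΦᵀΦ + λI_d)⁻¹ (1/n)ΦᵀR be the ridge regression solution. Then ‖Φᵀ(R − Φβ̂)‖₂ ≤ (max_{1≤j≤d} λ/(λ + σ_j²)) · ‖ΦᵀR‖₂, where σ_j² are the eigenvalues of (1/n)ΦᵀΦ. -/

import Mathlib

open Matrix

/-- Euclidean (ℓ²) norm of a finite real vector. -/
noncomputable def enorm3 {n : ℕ} (v : Fin n → ℝ) : ℝ :=
  ‖(WithLp.equiv 2 (Fin n → ℝ)).symm v‖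

lemma enorm3_eq {m : ℕ} (v : Fin m → ℝ) : enorm3 v = Real.sqrt (∑ i, v i ^ 2) := by
  rw [enorm3, EuclideanSpace.norm_eq]
  congr 1
  apply Finset.sum_congr rfl
  intro i _
  rw [WithLp.equiv_symm_apply, WithLp.ofLp_toLp, Real.norm_eq_abs, sq_abs]

lemma enorm3_mulVec_unitary {m : ℕ} (U : Matrix (Fin m) (Fin m) ℝ)
    (hU : U ∈ Matrix.unitaryGroup (Fin m) ℝ) (x : Fin m → ℝ) :
    enorm3 (U *ᵥ x) = enorm3 x := by
  rw [enorm3_eq, enorm3_eq]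
  congr 1
  have h1 : star U * U = 1 := hU.1
  calc ∑ i, (U *ᵥ x) i ^ 2 = (U *ᵥ x) ⬝ᵥ (U *ᵥ x) := by
        simp [dotProduct, pow_two]
    _ = x ⬝ᵥ ((star U * U) *ᵥ x) := by
        rw [← mulVec_mulVec, dotProduct_mulVec, ← mulVec_transpose, dotProduct_comm]
        congr 1
    _ = ∑ i, x i ^ 2 := by simp [h1, dotProduct, pow_two]

/-- One ridge-boosting step contracts the sample multiaccuracy error:
`‖Φᵀ(R − Φβ̂)‖₂ ≤ (max_j λ/(λ+σ_j²)) ‖ΦᵀR‖₂` where `σ_j²` are the eigenvalues of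
`(1/n)ΦᵀΦ` and `β̂` is the ridge solution. -/
theorem ridge_boosting_contracts_mae
    {n d : ℕ} (Φ : Matrix (Fin n) (Fin d) ℝ) (R : Fin n → ℝ) (lam : ℝ) (hlam : 0 < lam)
    (hA : ((1 / (n : ℝ)) • (Φᵀ * Φ)).IsHermitian)
    (βhat : Fin d → ℝ)
    (hβ : βhat = ((1 / (n : ℝ)) • (Φᵀ * Φ) + lam • (1 : Matrix (Fin d) (Fin d) ℝ))⁻¹ *ᵥ
      ((1 / (n : ℝ)) • (Φᵀ *ᵥ R))) :
    enorm3 (Φᵀ *ᵥ (R - Φ *ᵥ βhat)) ≤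
      (⨆ j : Fin d, lam / (lam + hA.eigenvalues j)) * enorm3 (Φᵀ *ᵥ R) := by
  classical
  set A := (1 / (n : ℝ)) • (Φᵀ * Φ) with hAdef
  set σ := hA.eigenvalues with hσdef
  set c := ⨆ j : Fin d, lam / (lam + σ j) with hcdef
  -- A is positive semidefinite
  have hpsd : A.PosSemidef := by
    have h1 : (0:ℝ) ≤ 1 / (n:ℝ) := by positivity
    have h2 := posSemidef_conjTranspose_mul_self Φ
    have h3 : Φᴴ = Φᵀ := by
      ext i j; simp [conjTranspose]
    rw [h3] at h2
    exact h2.smul h1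
  have hσ0 : ∀ j, 0 ≤ σ j := fun j => hpsd.eigenvalues_nonneg j
  have hpos : ∀ j, (0:ℝ) < lam + σ j := fun j => by linarith [hσ0 j]
  have hbdd : BddAbove (Set.range fun j : Fin d => lam / (lam + σ j)) :=
    (Set.finite_range _).bddAbove
  have hcj : ∀ j, lam / (lam + σ j) ≤ c := fun j => le_ciSup hbdd j
  have hc0 : 0 ≤ c := by
    rcases Nat.eq_zero_or_pos d with hd | hd
    · subst hd
      rw [hcdef, iSup_of_empty', Real.sSup_empty]
    · exact le_trans (le_of_lt (div_pos hlam (hpos ⟨0, hd⟩))) (hcj ⟨0, hd⟩)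
  rcases Nat.eq_zero_or_pos n with hn | hn
  · subst hn
    have hz : ∀ y : Fin 0 → ℝ, Φᵀ *ᵥ y = 0 := fun y => by
      funext j; simp [mulVec, dotProduct]
    rw [hz, hz]
    simp [enorm3_eq]
  have hne : (n:ℝ) ≠ 0 := Nat.cast_ne_zero.mpr hn.ne'
  set U := (hA.eigenvectorUnitary : Matrix (Fin d) (Fin d) ℝ) with hUdef
  have hUmem : U ∈ Matrix.unitaryGroup (Fin d) ℝ := hA.eigenvectorUnitary.2
  have hsUU : star U * U = 1 := hUmem.1
  have hUsU : U * star U = 1 := hUmem.2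
  have hpos' : ∀ j, (0:ℝ) < σ j + lam := fun j => by linarith [hσ0 j]
  have hspec : A = U * diagonal σ * star U := by
    have h := hA.spectral_theorem
    rwa [RCLike.ofReal_real_eq_id, Function.id_comp] at h
  set B := A + lam • (1 : Matrix (Fin d) (Fin d) ℝ) with hBdef
  have hD : diagonal σ + lam • (1 : Matrix (Fin d) (Fin d) ℝ)
      = diagonal (fun j => σ j + lam) := by
    rw [smul_one_eq_diagonal, diagonal_add]
  have hBspec : B = U * diagonal (fun j => σ j + lam) * star U := by
    have h1 : lam • (1 : Matrix (Fin d) (Fin d) ℝ) = U * (lam • 1) * star U := by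
      rw [mul_smul_comm, smul_mul_assoc, mul_one, hUsU]
    rw [hBdef, hspec, h1, ← Matrix.add_mul, ← Matrix.mul_add, hD]
  set C := U * diagonal (fun j => (σ j + lam)⁻¹) * star U with hCdef
  have hBC : B * C = 1 := by
    rw [hBspec, hCdef]
    calc (U * diagonal (fun j => σ j + lam) * star U) *
          (U * diagonal (fun j => (σ j + lam)⁻¹) * star U)
        = U * diagonal (fun j => σ j + lam) * (star U * U) *
            diagonal (fun j => (σ j + lam)⁻¹) * star U := by
          noncomm_ring
      _ = 1 := by
          rw [hsUU, mul_one, mul_assoc U, diagonal_mul_diagonal]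
          have : (fun j => (σ j + lam) * (σ j + lam)⁻¹) = fun _ : Fin d => (1:ℝ) := by
            funext j; exact mul_inv_cancel₀ (hpos' j).ne'
          rw [this, diagonal_one, mul_one, hUsU]
  have hBinv : B⁻¹ = C := inv_eq_right_inv hBC
  set v := Φᵀ *ᵥ R with hvdef
  -- key algebraic identity
  have hkey : Φᵀ *ᵥ (R - Φ *ᵥ βhat) = lam • (B⁻¹ *ᵥ v) := by
    have hβ' : βhat = B⁻¹ *ᵥ ((1 / (n:ℝ)) • v) := hβ
    have hBβ : B *ᵥ βhat = (1 / (n:ℝ)) • v := by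
      rw [hβ', hBinv, mulVec_mulVec, hBC, one_mulVec]
    have hAβ : A *ᵥ βhat = (1 / (n:ℝ)) • v - lam • βhat := by
      rw [hBdef, add_mulVec,
        smul_mulVec lam (1 : Matrix (Fin d) (Fin d) ℝ) βhat, one_mulVec] at hBβ
      linear_combination (norm := module) hBβ
    have h2 : (Φᵀ * Φ) *ᵥ βhat = (n:ℝ) • (A *ᵥ βhat) := by
      rw [hAdef, smul_mulVec, smul_smul]
      field_simp
      rw [one_smul]
    calc Φᵀ *ᵥ (R - Φ *ᵥ βhat) = v - (Φᵀ * Φ) *ᵥ βhat := by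
          rw [mulVec_sub, mulVec_mulVec]
      _ = v - (n:ℝ) • ((1 / (n:ℝ)) • v - lam • βhat) := by rw [h2, hAβ]
      _ = ((n:ℝ) * lam) • βhat := by
          rw [smul_sub, smul_smul, mul_one_div, div_self hne, one_smul, smul_smul]
          module
      _ = lam • (B⁻¹ *ᵥ v) := by
          rw [hβ', mulVec_smul, smul_smul]
          congr 1
          field_simp
  rw [hkey]
  -- spectral bound
  have hmat : lam • C = U * diagonal (fun j => lam * (σ j + lam)⁻¹) * star U := by
    rw [hCdef, ← smul_mul_assoc, ← mul_smul_comm, ← diagonal_smul]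
    congr 3
  have hform : lam • (B⁻¹ *ᵥ v) =
      U *ᵥ (diagonal (fun j => lam * (σ j + lam)⁻¹) *ᵥ (star U *ᵥ v)) := by
    conv_rhs => rw [mulVec_mulVec, mulVec_mulVec, ← hmat]
    rw [hBinv]
    exact (smul_mulVec lam C v).symm
  rw [hform, enorm3_mulVec_unitary _ hUmem]
  have hvw : enorm3 v = enorm3 (star U *ᵥ v) :=
    (enorm3_mulVec_unitary (star U) (Unitary.star_mem hUmem) v).symm
  rw [hvw]
  set w := star U *ᵥ v with hwdef
  rw [enorm3_eq, enorm3_eq]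
  have step : ∑ j, (diagonal (fun j => lam * (σ j + lam)⁻¹) *ᵥ w) j ^ 2 ≤
      c ^ 2 * ∑ j, w j ^ 2 := by
    rw [Finset.mul_sum]
    apply Finset.sum_le_sum
    intro j _
    rw [mulVec_diagonal, mul_pow]
    have hg0 : 0 ≤ lam * (σ j + lam)⁻¹ :=
      le_of_lt (mul_pos hlam (inv_pos.mpr (hpos' j)))
    have hgc : lam * (σ j + lam)⁻¹ ≤ c := by
      rw [← div_eq_mul_inv, add_comm (σ j) lam]
      exact hcj j
    exact mul_le_mul_of_nonneg_right (pow_le_pow_left₀ hg0 hgc 2) (sq_nonneg _)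
  calc Real.sqrt (∑ j, (diagonal (fun j => lam * (σ j + lam)⁻¹) *ᵥ w) j ^ 2)
      ≤ Real.sqrt (c ^ 2 * ∑ j, w j ^ 2) := Real.sqrt_le_sqrt step
    _ = c * Real.sqrt (∑ j, w j ^ 2) := by
        rw [Real.sqrt_mul (sq_nonneg c), Real.sqrt_sq hc0]
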